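/- In the free group F_K, w_1 · w_n = w_n · w_1 for all n ≥ 0, where w_n is the sum of all words of length n in the group algebra. Consequently the subalgebra generated by w_1 contains all w_n and is commutative. -/

import Mathlib

section RadialAux

variable {K : ℕ}

open FreeGroup in
lemma rc_norm_mul (ℓ : Fin K × Bool) (g : FreeGroup (Fin K)) :
    FreeGroup.norm (FreeGroup.mk [ℓ] * g) =
      if g.toWord.head? = some (ℓ.1, !ℓ.2) then g.toWord.length - 1
      else g.toWord.length + 1 := by
  have h1 : (FreeGroup.mk [ℓ] * g).toWord = reduce (ℓ :: g.toWord) := by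
    conv_lhs => rw [← mk_toWord (x := g), mul_mk, toWord_mk]
    rfl
  have hnorm : FreeGroup.norm (FreeGroup.mk [ℓ] * g) = (reduce (ℓ :: g.toWord)).length := by
    rw [FreeGroup.norm, h1]
  rw [hnorm]
  rcases hu : g.toWord with _ | ⟨hd, tl⟩
  · simp [reduce]
  · have hred : reduce (hd :: tl) = hd :: tl := by rw [← hu]; exact g.reduce_toWord
    rw [reduce.cons, hred]
    dsimp only
    by_cases hc : hd = (ℓ.1, !ℓ.2)
    · have h2 : ℓ.1 = hd.1 ∧ ℓ.2 = !hd.2 := by subst hc; simp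
      rw [if_pos h2, if_pos (by subst hc; simp)]
      simp
    · have h2 : ¬(ℓ.1 = hd.1 ∧ ℓ.2 = !hd.2) := by
        intro ⟨h1', h2'⟩
        exact hc (Prod.ext h1'.symm (by simp [h2']))
      rw [if_neg h2, if_neg (by simpa using hc)]
      simp

/-- The number of letters `ℓ` with `|mk [ℓ] * g| = n`, as a function of `|g|` and `n`. -/
noncomputable def Fcnt (K m n : ℕ) : ℂ :=
  if m = 0 then (if n = 1 then (2 * K : ℂ) else 0)
  else (if m - 1 = n then 1 else 0) + (2 * K - 1) * (if m + 1 = n then 1 else 0)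

lemma rc_count (g : FreeGroup (Fin K)) (n : ℕ) :
    (∑ ℓ : Fin K × Bool, if FreeGroup.norm (FreeGroup.mk [ℓ] * g) = n then (1 : ℂ) else 0)
      = Fcnt K (FreeGroup.norm g) n := by
  have hng : FreeGroup.norm g = g.toWord.length := rfl
  rcases hu : g.toWord with _ | ⟨hd, tl⟩
  · have key : ∀ ℓ : Fin K × Bool,
        (if FreeGroup.norm (FreeGroup.mk [ℓ] * g) = n then (1 : ℂ) else 0)
          = (if n = 1 then (1 : ℂ) else 0) := by
      intro ℓ
      rw [rc_norm_mul, hu]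
      simp [eq_comm]
    rw [Finset.sum_congr rfl (fun ℓ _ => key ℓ), Finset.sum_const]
    rw [Fcnt, hng, hu]
    simp only [List.length_nil, if_pos rfl]
    simp [Finset.card_univ]
    split_ifs <;> ring
  · set ℓ₀ : Fin K × Bool := (hd.1, !hd.2) with hℓ₀
    set a : ℂ := if tl.length = n then 1 else 0 with ha
    set b : ℂ := if tl.length + 1 + 1 = n then 1 else 0 with hb
    have key : ∀ ℓ : Fin K × Bool,
        (if FreeGroup.norm (FreeGroup.mk [ℓ] * g) = n then (1 : ℂ) else 0)
          = b + (if ℓ = ℓ₀ then a - b else 0) := by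
      intro ℓ
      rw [rc_norm_mul, hu]
      by_cases hc : ℓ = ℓ₀
      · subst hc
        have hhead : (hd :: tl).head? = some (ℓ₀.1, !ℓ₀.2) := by simp [hℓ₀]
        rw [if_pos hhead, if_pos rfl]
        have hba : b + (a - b) = a := by ring
        rw [hba]
        simp only [List.length_cons, Nat.add_sub_cancel, ha]
      · have hne : ¬((hd :: tl).head? = some (ℓ.1, !ℓ.2)) := by
          simp only [List.head?_cons, Option.some_inj]
          intro h
          exact hc (by rw [hℓ₀]; subst h; simp)
        rw [if_neg hne, if_neg hc, add_zero]
        simp only [List.length_cons, hb]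
    rw [Finset.sum_congr rfl (fun ℓ _ => key ℓ), Finset.sum_add_distrib, Finset.sum_const,
      Fintype.sum_ite_eq' ℓ₀ (fun _ => a - b)]
    have hcard : (Finset.univ : Finset (Fin K × Bool)).card = 2 * K := by
      simp [Finset.card_univ]
      ring
    rw [hcard, Fcnt, hng, hu]
    simp only [List.length_cons, Nat.add_sub_cancel, ← ha, ← hb]
    rw [if_neg (Nat.succ_ne_zero _)]
    push_cast [nsmul_eq_mul]
    ring

/-- Negating the sign of a letter, as an equivalence. -/
def negLetter (K : ℕ) : (Fin K × Bool) ≃ (Fin K × Bool) where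
  toFun ℓ := (ℓ.1, !ℓ.2)
  invFun ℓ := (ℓ.1, !ℓ.2)
  left_inv ℓ := by simp
  right_inv ℓ := by simp

lemma rc_mk_inj : Function.Injective (fun ℓ : Fin K × Bool => FreeGroup.mk [ℓ]) := by
  intro ℓ ℓ' h
  have h2 := congrArg FreeGroup.toWord h
  rw [FreeGroup.toWord_mk, FreeGroup.toWord_mk, FreeGroup.reduce_singleton,
    FreeGroup.reduce_singleton] at h2
  simpa using h2

variable (W : ℕ → Finset (FreeGroup (Fin K)))
    (hW : ∀ n g, g ∈ W n ↔ FreeGroup.norm g = n)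
    (w : ℕ → MonoidAlgebra ℂ (FreeGroup (Fin K)))
    (hw : ∀ n, w n = ∑ g ∈ W n, MonoidAlgebra.single g (1 : ℂ))

include hW hw

omit hw in
lemma rc_W1 : W 1 = Finset.image (fun ℓ : Fin K × Bool => FreeGroup.mk [ℓ]) Finset.univ := by
  ext a
  simp only [Finset.mem_image, Finset.mem_univ, true_and, hW]
  constructor
  · intro h
    obtain ⟨ℓ, hℓ⟩ := List.length_eq_one_iff.mp (h : a.toWord.length = 1)
    exact ⟨ℓ, by rw [← FreeGroup.mk_toWord (x := a), hℓ]⟩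
  · rintro ⟨ℓ, rfl⟩
    show (FreeGroup.mk [ℓ]).toWord.length = 1
    rw [FreeGroup.toWord_mk, FreeGroup.reduce_singleton]
    rfl

lemma rc_wn_apply (n : ℕ) (h : FreeGroup (Fin K)) :
    (w n).coeff h = if FreeGroup.norm h = n then (1 : ℂ) else 0 := by
  rw [hw, MonoidAlgebra.coeff_sum, Finset.sum_apply']
  have key : ∀ g ∈ W n, (MonoidAlgebra.single g (1 : ℂ)).coeff h = if g = h then (1 : ℂ) else 0 :=
    fun g _ => Finsupp.single_apply
  rw [Finset.sum_congr rfl key, Finset.sum_ite_eq' (W n) h (fun _ => (1 : ℂ))]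
  by_cases hh : h ∈ W n
  · rw [if_pos hh, if_pos ((hW n h).mp hh)]
  · rw [if_neg hh, if_neg (fun hc => hh ((hW n h).mpr hc))]

lemma rc_left (n : ℕ) (g : FreeGroup (Fin K)) :
    (w 1 * w n).coeff g = Fcnt K (FreeGroup.norm g) n := by
  rw [show w 1 = ∑ a ∈ W 1, MonoidAlgebra.single a (1 : ℂ) from hw 1, Finset.sum_mul,
    MonoidAlgebra.coeff_sum, Finset.sum_apply', rc_W1 W hW, Finset.sum_image (fun x _ y _ h => rc_mk_inj h)]
  have step : ∀ ℓ : Fin K × Bool,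
      ((MonoidAlgebra.single (FreeGroup.mk [ℓ]) (1 : ℂ)) * w n).coeff g
        = (fun ℓ' : Fin K × Bool =>
            if FreeGroup.norm (FreeGroup.mk [ℓ'] * g) = n then (1 : ℂ) else 0)
          ((negLetter K) ℓ) := by
    intro ℓ
    rw [MonoidAlgebra.coeff_single_mul_apply, one_mul, rc_wn_apply W hW w hw]
    have hinv : (FreeGroup.mk [ℓ])⁻¹ = FreeGroup.mk [(negLetter K) ℓ] := by
      rw [FreeGroup.inv_mk]
      simp [FreeGroup.invRev, negLetter]
    rw [hinv]
  rw [Finset.sum_congr rfl (fun ℓ _ => step ℓ)]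
  exact (Equiv.sum_comp (negLetter K) (fun ℓ' : Fin K × Bool =>
    if FreeGroup.norm (FreeGroup.mk [ℓ'] * g) = n then (1 : ℂ) else 0)).trans (rc_count g n)

lemma rc_right (n : ℕ) (g : FreeGroup (Fin K)) :
    (w n * w 1).coeff g = Fcnt K (FreeGroup.norm g) n := by
  rw [show w 1 = ∑ a ∈ W 1, MonoidAlgebra.single a (1 : ℂ) from hw 1, Finset.mul_sum,
    MonoidAlgebra.coeff_sum, Finset.sum_apply', rc_W1 W hW, Finset.sum_image (fun x _ y _ h => rc_mk_inj h)]
  have step : ∀ ℓ : Fin K × Bool,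
      (w n * (MonoidAlgebra.single (FreeGroup.mk [ℓ]) (1 : ℂ))).coeff g
        = (if FreeGroup.norm (FreeGroup.mk [ℓ] * g⁻¹) = n then (1 : ℂ) else 0) := by
    intro ℓ
    rw [MonoidAlgebra.coeff_mul_single_apply, mul_one, rc_wn_apply W hW w hw]
    have hn : FreeGroup.norm (g * (FreeGroup.mk [ℓ])⁻¹)
        = FreeGroup.norm (FreeGroup.mk [ℓ] * g⁻¹) := by
      rw [← FreeGroup.norm_inv_eq (x := g * (FreeGroup.mk [ℓ])⁻¹), mul_inv_rev, inv_inv]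
    rw [hn]
  rw [Finset.sum_congr rfl (fun ℓ _ => step ℓ), rc_count g⁻¹ n, FreeGroup.norm_inv_eq]

lemma rc_comm (n : ℕ) : w 1 * w n = w n * w 1 :=
  MonoidAlgebra.coeff_injective (Finsupp.ext fun g => by rw [rc_left W hW w hw n g, rc_right W hW w hw n g])

lemma rc_rec (n : ℕ) (hn : 1 ≤ n) :
    w 1 * w n = w (n + 1) + (if n = 1 then (2 * K : ℂ) else (2 * K - 1)) • w (n - 1) := by
  refine MonoidAlgebra.coeff_injective (Finsupp.ext fun g => ?_)
  rw [MonoidAlgebra.coeff_add, Finsupp.add_apply, MonoidAlgebra.coeff_smul, Finsupp.smul_apply, rc_left W hW w hw n g,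
    rc_wn_apply W hW w hw, rc_wn_apply W hW w hw, smul_eq_mul, Fcnt]
  rcases Nat.eq_zero_or_pos (FreeGroup.norm g) with hm | hm
  · rw [if_pos hm, hm]
    split_ifs <;> first | ring1 | (exfalso; first | assumption | omega)
  · rw [if_neg (by omega)]
    split_ifs <;> first | ring1 | (exfalso; first | assumption | omega)

end RadialAux

/-- In the free group `F_K`, `w 1 * w n = w n * w 1` for all `n ≥ 0`, where `w n` is
the sum of all words of length `n` in the group algebra.  Consequently the subalgebra
generated by `w 1` contains all the `w n` (and in particular is commutative). -/
theorem radial_commutes (K : ℕ) (hK : 2 ≤ K)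
    (W : ℕ → Finset (FreeGroup (Fin K)))
    (hW : ∀ n g, g ∈ W n ↔ FreeGroup.norm g = n)
    (w : ℕ → MonoidAlgebra ℂ (FreeGroup (Fin K)))
    (hw : ∀ n, w n = ∑ g ∈ W n, MonoidAlgebra.single g (1 : ℂ)) :
    (∀ n, w 1 * w n = w n * w 1) ∧
    (∀ n, w n ∈ Algebra.adjoin ℂ ({w 1} : Set (MonoidAlgebra ℂ (FreeGroup (Fin K))))) ∧
    (∀ x ∈ Algebra.adjoin ℂ ({w 1} : Set (MonoidAlgebra ℂ (FreeGroup (Fin K)))),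
      ∀ y ∈ Algebra.adjoin ℂ ({w 1} : Set (MonoidAlgebra ℂ (FreeGroup (Fin K)))),
        x * y = y * x) := by
  have h0 : w 0 = 1 := by
    have hW0 : W 0 = {1} := by
      ext g
      simp [hW, FreeGroup.norm_eq_zero]
    rw [hw, hW0]
    simp [MonoidAlgebra.one_def]
  have hmem : ∀ n, w n ∈ Algebra.adjoin ℂ ({w 1} : Set (MonoidAlgebra ℂ (FreeGroup (Fin K))))
      ∧ w (n + 1) ∈ Algebra.adjoin ℂ ({w 1} : Set (MonoidAlgebra ℂ (FreeGroup (Fin K)))) := by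
    intro n
    induction n with
    | zero => exact ⟨h0 ▸ one_mem _, Algebra.self_mem_adjoin_singleton ℂ _⟩
    | succ k ih =>
      refine ⟨ih.2, ?_⟩
      have hr := rc_rec W hW w hw (k + 1) (by omega)
      have h2 : w (k + 1 + 1) = w 1 * w (k + 1)
          - (if k + 1 = 1 then (2 * K : ℂ) else (2 * K - 1)) • w k := by
        rw [hr]
        simp
      rw [h2]
      exact sub_mem (mul_mem (Algebra.self_mem_adjoin_singleton ℂ _) ih.2)
        (Subalgebra.smul_mem _ ih.1 _)
  refine ⟨rc_comm W hW w hw, fun n => (hmem n).1, fun x hx y hy => ?_⟩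
  exact (Algebra.commute_of_mem_adjoin_singleton_of_commute hy
    ((Algebra.commute_of_mem_adjoin_self hx).symm)).eq
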